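/- Let F be a family of graphs on a fixed vertex set V, all with the same matching number, partitioned according to their Gallai–Edmonds decompositions (including the components of D). If each non-empty part F_{(D₁,…,D_r;A;C)} has an acyclic element matching, then the union of these matchings is an acyclic element matching on F. -/

import Mathlib

attribute [local instance] Classical.propDecidable

variable {α : Type} [DecidableEq α]

/-- An element matching on a family `F` of finite sets: a set `M` of pairs `(σ, τ)` with
`σ ⊊ τ`, `|τ \ σ| = 1`, each member of `F` appearing in at most one pair. -/
def IsElemMatching (F : Set (Finset α)) (M : Set (Finset α × Finset α)) : Prop :=
  (∀ p ∈ M, p.1 ∈ F ∧ p.2 ∈ F ∧ p.1 ⊂ p.2 ∧ (p.2 \ p.1).card = 1) ∧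
  ∀ p ∈ M, ∀ q ∈ M, p ≠ q → p.1 ≠ q.1 ∧ p.1 ≠ q.2 ∧ p.2 ≠ q.1 ∧ p.2 ≠ q.2

/-- The edge relation of the digraph `D(F, M)`: matched covers are oriented upwards,
unmatched covers downwards. -/
def MorseEdge (F : Set (Finset α)) (M : Set (Finset α × Finset α)) (σ τ : Finset α) : Prop :=
  σ ∈ F ∧ τ ∈ F ∧ ((σ, τ) ∈ M ∨ (τ ⊂ σ ∧ (σ \ τ).card = 1 ∧ (τ, σ) ∉ M))

/-- The element matching `M` is acyclic: the digraph `D(F, M)` has no directed cycle. -/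
def MorseAcyclic (F : Set (Finset α)) (M : Set (Finset α × Finset α)) : Prop :=
  ∀ σ, ¬ Relation.TransGen (MorseEdge F M) σ σ

/-- A member of `F` is critical for `M` if it appears in no pair of `M`. -/
def MorseCritical (F : Set (Finset α)) (M : Set (Finset α × Finset α)) (σ : Finset α) : Prop :=
  σ ∈ F ∧ ∀ p ∈ M, σ ≠ p.1 ∧ σ ≠ p.2

/-- A matching: a finite set of non-loop edges that are pairwise vertex-disjoint. -/
def IsMatching {V : Type} (M : Finset (Sym2 V)) : Prop :=
  (∀ e ∈ M, ¬ e.IsDiag) ∧ ∀ e ∈ M, ∀ f ∈ M, e ≠ f → ∀ v, v ∈ e → v ∉ f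

/-- The matching number of a finite edge set. -/
noncomputable def enu {V : Type} (G : Finset (Sym2 V)) : ℕ :=
  (G.powerset.filter fun M => IsMatching M).sup Finset.card

/-- Adjacency in the graph with edge set `G`. -/
def eAdj {V : Type} (G : Finset (Sym2 V)) (x y : V) : Prop := s(x, y) ∈ G ∧ x ≠ y

/-- Deleting a vertex from the graph with edge set `G`. -/
noncomputable def edelV {V : Type} (G : Finset (Sym2 V)) (v : V) : Finset (Sym2 V) :=
  G.filter fun e => v ∉ e

/-- The Gallai–Edmonds set `D(G) = {v : ν(G - v) = ν(G)}`. -/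
def eD {V : Type} (G : Finset (Sym2 V)) : Set V := {v | enu (edelV G v) = enu G}

/-- The Gallai–Edmonds set `A(G) = N_G(D(G))`. -/
def eA {V : Type} (G : Finset (Sym2 V)) : Set V :=
  {w | w ∉ eD G ∧ ∃ d ∈ eD G, eAdj G w d}

/-- Same component of the induced subgraph on `D(G)`. -/
def eReachD {V : Type} (G : Finset (Sym2 V)) : V → V → Prop :=
  Relation.ReflTransGen fun a b => eAdj G a b ∧ a ∈ eD G ∧ b ∈ eD G

/-- Two graphs have the same Gallai–Edmonds decomposition, including the components
of `D` (then `C` agrees as well, being the complement of `D ∪ A`). -/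
def sameGE {V : Type} (G₁ G₂ : Finset (Sym2 V)) : Prop :=
  eD G₁ = eD G₂ ∧ eA G₁ = eA G₂ ∧ ∀ x y, eReachD G₁ x y ↔ eReachD G₂ x y


section Aux

variable {V : Type} [DecidableEq V]

lemma sameGE_refl (G : Finset (Sym2 V)) : sameGE G G :=
  ⟨rfl, rfl, fun _ _ => Iff.rfl⟩

lemma sameGE_symm {G H : Finset (Sym2 V)} (h : sameGE G H) : sameGE H G :=
  ⟨h.1.symm, h.2.1.symm, fun x y => (h.2.2 x y).symm⟩

lemma sameGE_trans {G H K : Finset (Sym2 V)} (h1 : sameGE G H) (h2 : sameGE H K) :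
    sameGE G K :=
  ⟨h1.1.trans h2.1, h1.2.1.trans h2.2.1, fun x y => (h1.2.2 x y).trans (h2.2.2 x y)⟩

lemma enu_mono {G₁ G₂ : Finset (Sym2 V)} (h : G₁ ⊆ G₂) : enu G₁ ≤ enu G₂ := by
  apply Finset.sup_le
  intro M hMm
  simp only [Finset.mem_filter, Finset.mem_powerset] at hMm
  exact Finset.le_sup (by
    simp only [Finset.mem_filter, Finset.mem_powerset]
    exact ⟨hMm.1.trans h, hMm.2⟩)

lemma edelV_mono {G₁ G₂ : Finset (Sym2 V)} (h : G₁ ⊆ G₂) (v : V) :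
    edelV G₁ v ⊆ edelV G₂ v := by
  intro e he
  simp only [edelV, Finset.mem_filter] at he ⊢
  exact ⟨h he.1, he.2⟩

lemma edelV_subset (G : Finset (Sym2 V)) (v : V) : edelV G v ⊆ G := by
  intro e he
  simp only [edelV, Finset.mem_filter] at he
  exact he.1

lemma eD_mono {G₁ G₂ : Finset (Sym2 V)} (h : G₁ ⊆ G₂) (he : enu G₁ = enu G₂) :
    eD G₁ ⊆ eD G₂ := by
  intro v hv
  have h1 : enu (edelV G₁ v) = enu G₁ := hv
  have h2 : enu (edelV G₁ v) ≤ enu (edelV G₂ v) := enu_mono (edelV_mono h v)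
  have h3 : enu (edelV G₂ v) ≤ enu G₂ := enu_mono (edelV_subset _ _)
  show enu (edelV G₂ v) = enu G₂
  omega

/-- A preorder on graphs capturing the Gallai–Edmonds "monotone" data. -/
def geLE (G H : Finset (Sym2 V)) : Prop :=
  eD G ⊆ eD H ∧ (eD G = eD H → eA G ⊆ eA H) ∧
    (eD G = eD H → ∀ x y, eReachD G x y → eReachD H x y)

lemma geLE_trans {G H K : Finset (Sym2 V)} (h1 : geLE G H) (h2 : geLE H K) :
    geLE G K := by
  refine ⟨h1.1.trans h2.1, ?_, ?_⟩
  · intro hDK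
    have hDH : eD G = eD H := Set.Subset.antisymm h1.1 (by rw [hDK]; exact h2.1)
    have hHK : eD H = eD K := hDH ▸ hDK
    exact (h1.2.1 hDH).trans (h2.2.1 hHK)
  · intro hDK x y hr
    have hDH : eD G = eD H := Set.Subset.antisymm h1.1 (by rw [hDK]; exact h2.1)
    have hHK : eD H = eD K := hDH ▸ hDK
    exact h2.2.2 hHK x y (h1.2.2 hDH x y hr)

lemma geLE_antisymm {G H : Finset (Sym2 V)} (h1 : geLE G H) (h2 : geLE H G) :
    sameGE G H := by
  have hD : eD G = eD H := Set.Subset.antisymm h1.1 h2.1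
  exact ⟨hD, Set.Subset.antisymm (h1.2.1 hD) (h2.2.1 hD.symm),
    fun x y => ⟨h1.2.2 hD x y, h2.2.2 hD.symm x y⟩⟩

lemma sameGE_geLE {G H : Finset (Sym2 V)} (h : sameGE G H) : geLE G H :=
  ⟨h.1.subset, fun _ => h.2.1.subset, fun _ x y hr => (h.2.2 x y).1 hr⟩

lemma geLE_of_subset {G H : Finset (Sym2 V)} (hsub : G ⊆ H) (he : enu G = enu H) :
    geLE G H := by
  refine ⟨eD_mono hsub he, ?_, ?_⟩
  · intro hD w hw
    obtain ⟨hw1, d, hd, hadj⟩ := hw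
    exact ⟨hD ▸ hw1, d, hD ▸ hd, hsub hadj.1, hadj.2⟩
  · intro hD x y hr
    refine Relation.ReflTransGen.mono ?_ _ _ hr
    rintro a b ⟨hadj, ha, hb⟩
    exact ⟨⟨hsub hadj.1, hadj.2⟩, hD ▸ ha, hD ▸ hb⟩

/-- Cycle lemma: along a transitive-closure path, the preorder decreases; if the
endpoints are comparable both ways, every vertex on the path is equivalent to the
start and the path lives in the restricted relation. -/
lemma cycle_lemma {β : Type*} (e le eqv : β → β → Prop)
    (hle : ∀ a b, e a b → le b a)
    (htrans : ∀ {a b c}, le a b → le b c → le a c)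
    (hanti : ∀ {a b}, le a b → le b a → eqv a b)
    (hsymm : ∀ {a b}, eqv a b → eqv b a)
    (heqtrans : ∀ {a b c}, eqv a b → eqv b c → eqv a c)
    (hrefl : ∀ a, eqv a a) :
    ∀ a b, Relation.TransGen e a b →
      le b a ∧ (le a b →
        Relation.TransGen (fun x y => e x y ∧ eqv x a ∧ eqv y a) a b) := by
  intro a b h
  induction h with
  | single h =>
    refine ⟨hle _ _ h, fun hab => ?_⟩
    exact Relation.TransGen.single ⟨h, hrefl a, hsymm (hanti hab (hle _ _ h))⟩
  | @tail b c hab hbc ih =>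
    have hcb : le c b := hle _ _ hbc
    refine ⟨htrans hcb ih.1, fun hac => ?_⟩
    have hab' : le a b := htrans hac hcb
    have heab : eqv a b := hanti hab' ih.1
    have hebc : eqv b c := hanti (htrans ih.1 hac) hcb
    exact Relation.TransGen.tail (ih.2 hab')
      ⟨hbc, hsymm heab, hsymm (heqtrans heab hebc)⟩

end Aux

/-- Let `F` be a family of graphs on a fixed vertex set, all with the same matching
number, partitioned according to their Gallai–Edmonds decompositions. If each non-empty
part carries an acyclic element matching (given by `𝓜`, constant on parts), then the
union of these matchings is an acyclic element matching on `F`. -/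
theorem GE_partition_acyclic {V : Type} [DecidableEq V]
    (F : Set (Finset (Sym2 V))) (ν₀ : ℕ)
    (hν : ∀ G ∈ F, enu G = ν₀)
    (hsimple : ∀ G ∈ F, ∀ e ∈ G, ¬ e.IsDiag)
    (𝓜 : Finset (Sym2 V) → Set (Finset (Sym2 V) × Finset (Sym2 V)))
    (hconst : ∀ G₁ ∈ F, ∀ G₂ ∈ F, sameGE G₁ G₂ → 𝓜 G₁ = 𝓜 G₂)
    (hM : ∀ G₀ ∈ F, IsElemMatching {G ∈ F | sameGE G G₀} (𝓜 G₀) ∧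
                    MorseAcyclic {G ∈ F | sameGE G G₀} (𝓜 G₀)) :
    IsElemMatching F (⋃ G₀ ∈ F, 𝓜 G₀) ∧ MorseAcyclic F (⋃ G₀ ∈ F, 𝓜 G₀) := by
  classical
  set Mun := ⋃ G₀ ∈ F, 𝓜 G₀ with hMun
  have hmem : ∀ p ∈ Mun, ∃ G₀ ∈ F, p ∈ 𝓜 G₀ := by
    intro p hp
    rw [hMun] at hp
    simpa using hp
  have hsub : ∀ G₀ ∈ F, 𝓜 G₀ ⊆ Mun := by
    intro G₀ hG₀ p hp
    simp only [hMun, Set.mem_iUnion]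
    exact ⟨G₀, hG₀, hp⟩
  -- membership in a part
  have hpart : ∀ G₀ ∈ F, ∀ p ∈ 𝓜 G₀,
      (p.1 ∈ F ∧ sameGE p.1 G₀) ∧ (p.2 ∈ F ∧ sameGE p.2 G₀) ∧
        p.1 ⊂ p.2 ∧ (p.2 \ p.1).card = 1 := by
    intro G₀ hG₀ p hp
    have h := (hM G₀ hG₀).1.1 p hp
    exact ⟨h.1, h.2.1, h.2.2⟩
  constructor
  · constructor
    · intro p hp
      obtain ⟨G₀, hG₀, hpM⟩ := hmem p hp
      obtain ⟨h1, h2, h3, h4⟩ := hpart G₀ hG₀ p hpM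
      exact ⟨h1.1, h2.1, h3, h4⟩
    · intro p hp q hq hpq
      obtain ⟨G₁, hG₁, hpM⟩ := hmem p hp
      obtain ⟨G₂, hG₂, hqM⟩ := hmem q hq
      by_cases hs : sameGE G₁ G₂
      · have : 𝓜 G₁ = 𝓜 G₂ := hconst G₁ hG₁ G₂ hG₂ hs
        exact (hM G₁ hG₁).1.2 p hpM q (this ▸ hqM) hpq
      · obtain ⟨⟨_, hp1⟩, ⟨_, hp2⟩, _, _⟩ := hpart G₁ hG₁ p hpM
        obtain ⟨⟨_, hq1⟩, ⟨_, hq2⟩, _, _⟩ := hpart G₂ hG₂ q hqM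
        refine ⟨?_, ?_, ?_, ?_⟩
        · intro he; exact hs (sameGE_trans (sameGE_symm (he ▸ hp1)) hq1)
        · intro he; exact hs (sameGE_trans (sameGE_symm (he ▸ hp1)) hq2)
        · intro he; exact hs (sameGE_trans (sameGE_symm (he ▸ hp2)) hq1)
        · intro he; exact hs (sameGE_trans (sameGE_symm (he ▸ hp2)) hq2)
  · intro σ hcyc
    -- σ ∈ F from the last edge of the cycle
    have hσF : σ ∈ F := by
      cases hcyc with
      | single h => exact h.1
      | tail _ h => exact h.2.1
    -- every edge decreases geLE
    have hedge : ∀ a b : Finset (Sym2 V), MorseEdge F Mun a b → geLE b a := by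
      rintro a b ⟨haF, hbF, h | ⟨hss, _, _⟩⟩
      · obtain ⟨G₀, hG₀, hmem'⟩ := hmem _ h
        obtain ⟨⟨_, h1⟩, ⟨_, h2⟩, _, _⟩ := hpart G₀ hG₀ _ hmem'
        exact sameGE_geLE (sameGE_trans h2 (sameGE_symm h1))
      · exact geLE_of_subset hss.subset ((hν b hbF).trans (hν a haF).symm)
    obtain ⟨-, hres⟩ := cycle_lemma (MorseEdge F Mun) geLE sameGE hedge
      (fun h1 h2 => geLE_trans h1 h2) (fun h1 h2 => geLE_antisymm h1 h2)
      (fun h => sameGE_symm h) (fun h1 h2 => sameGE_trans h1 h2)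
      sameGE_refl σ σ hcyc
    have hres' := hres (sameGE_geLE (sameGE_refl σ))
    -- transfer the cycle into the part of σ
    have : Relation.TransGen (MorseEdge {G ∈ F | sameGE G σ} (𝓜 σ)) σ σ := by
      refine Relation.TransGen.mono ?_ _ _ hres'
      rintro x y ⟨⟨hxF, hyF, hcov⟩, hx, hy⟩
      refine ⟨⟨hxF, hx⟩, ⟨hyF, hy⟩, ?_⟩
      rcases hcov with h | ⟨hss, hcard, hnm⟩
      · obtain ⟨G₀, hG₀, hmem'⟩ := hmem _ h
        obtain ⟨⟨_, h1⟩, _, _, _⟩ := hpart G₀ hG₀ _ hmem'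
        have hGσ : sameGE G₀ σ := sameGE_trans (sameGE_symm h1) hx
        have := hconst G₀ hG₀ σ hσF hGσ
        exact Or.inl (this ▸ hmem')
      · exact Or.inr ⟨hss, hcard, fun hc => hnm (hsub σ hσF hc)⟩
    exact (hM σ hσF).2 σ this
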